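/- Let θ be a ternary relation on ℕ, n, d ∈ ℕ, and let X ⊆ ℕ be a finite set that is ω^{n+2}·(d, …, d)-large*(θ) (n repetitions of d), exp-sparse, and satisfies 2^{d^n} ≤ min X. Let f be a 2-coloring of the 2-element subsets of X. Then there exists a family (Y_σ)_{σ ∈ d^n}, indexed by the sequences of length n over {0,…,d−1}, of ω^n-large*(θ) subsets of X such that: (i) Y_σ < Y_τ and Y_σ, Y_τ are θ-apart whenever σ is lexicographically before τ, and more generally the map g on d^{≤n} defined by g(σ) = ⋃{Y_ρ : ρ ∈ d^n extends σ} satisfies that for every ℓ ≤ n and σ, τ ∈ d^ℓ with σ lexicographically before τ, g(σ) < g(τ) and g(σ), g(τ) are θ-apart (so Y = ⋃_σ Y_σ is ω^n·(d,…,d)-large*(θ) with n repetitions); and (ii) there is a coloring g' of the 2-element subsets of d^n with 2 colors such that for all σ ≠ τ in d^n, all x ∈ Y_σ and y ∈ Y_τ, f({x,y}) = g'({σ,τ}). -/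

import Mathlib

/-- The minimum of a finite set of naturals (`0` if empty). -/
noncomputable def minN (X : Finset ℕ) : ℕ := sInf (X : Set ℕ)

/-- The maximum of a finite set of naturals (`0` if empty). -/
def maxN (X : Finset ℕ) : ℕ := X.sup id

/-- `E` lies entirely below `F`. -/
def SetBelow (E F : Finset ℕ) : Prop := ∀ x ∈ E, ∀ y ∈ F, x < y

/-- `E` and `F` are `θ`-apart: for every `x < max E` there is `y < min F`
with `θ x y z` for all `z < max F`. -/
def ThetaApart (θ : ℕ → ℕ → ℕ → Prop) (E F : Finset ℕ) : Prop :=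
  ∀ x < maxN E, ∃ y < minN F, ∀ z < maxN F, θ x y z

/-- `L·k`: finite sets containing `k` pairwise `θ`-apart members `X₀ < ⋯ < X_{k-1}` of `L`. -/
def MulK (θ : ℕ → ℕ → ℕ → Prop) (L : Set (Finset ℕ)) (k : ℕ) : Set (Finset ℕ) :=
  {F | ∃ X : Fin k → Finset ℕ, (∀ i, X i ∈ L) ∧ (∀ i, X i ⊆ F) ∧
    ∀ i j, i < j → SetBelow (X i) (X j) ∧ ThetaApart θ (X i) (X j)}

/-- `L·σ` for a finite sequence `σ`: `L·ε = L`, `L·(k⌢τ) = (L·k)·τ`. -/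
def MulSeq (θ : ℕ → ℕ → ℕ → Prop) (L : Set (Finset ℕ)) : List ℕ → Set (Finset ℕ)
  | [] => L
  | k :: τ => MulSeq θ (MulK θ L k) τ

/-- `L^θ_n`: the `ω^n`-large*(θ) finite sets. -/
noncomputable def LargeStar (θ : ℕ → ℕ → ℕ → Prop) : ℕ → Set (Finset ℕ)
  | 0 => {X | X.Nonempty}
  | n + 1 => {X | X.Nonempty ∧
      X.erase (minN X) ∈ MulSeq θ (LargeStar θ n) (List.replicate (n + 1) (minN X))}

/-- `ω^n`-largeness(θ) (the non-starred notion). -/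
noncomputable def LargeTheta (θ : ℕ → ℕ → ℕ → Prop) : ℕ → Set (Finset ℕ)
  | 0 => {X | X.Nonempty}
  | n + 1 => {X | X.Nonempty ∧ X.erase (minN X) ∈ MulK θ (LargeTheta θ n) (minN X)}

/-- `L·k` without θ-apartness (plain largeness product). -/
def MulKPlain (L : Set (Finset ℕ)) (k : ℕ) : Set (Finset ℕ) :=
  {F | ∃ X : Fin k → Finset ℕ, (∀ i, X i ∈ L) ∧ (∀ i, X i ⊆ F) ∧
    ∀ i j, i < j → SetBelow (X i) (X j)}

/-- Ketonen–Solovay `ω^n`-largeness (no θ). -/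
noncomputable def LargePlain : ℕ → Set (Finset ℕ)
  | 0 => {X | X.Nonempty}
  | n + 1 => {X | X.Nonempty ∧ X.erase (minN X) ∈ MulKPlain (LargePlain n) (minN X)}

/-- `g`-sparsity. -/
def GSparse (g : ℕ → ℕ) (X : Finset ℕ) : Prop := ∀ x ∈ X, ∀ y ∈ X, x < y → g x < y

/-- exp-sparsity. -/
def ExpSparse (X : Finset ℕ) : Prop := ∀ x ∈ X, ∀ y ∈ X, x < y → 4 ^ x < y

/-- `ω^k`-sparsity. -/
def OmegaSparse (k : ℕ) (X : Finset ℕ) : Prop :=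
  ∀ x ∈ X, ∀ y ∈ X, x < y → Finset.Ioc x y ∈ LargePlain k

namespace Stmt15

open Finset

variable {θ : ℕ → ℕ → ℕ → Prop}

/-! ### basic facts about minN/maxN -/

lemma minN_mem {S : Finset ℕ} (h : S.Nonempty) : minN S ∈ S := by
  have : (S : Set ℕ).Nonempty := by exact_mod_cast h
  exact_mod_cast Nat.sInf_mem this

lemma minN_le {S : Finset ℕ} {y : ℕ} (h : y ∈ S) : minN S ≤ y :=
  Nat.sInf_le (by exact_mod_cast h)

lemma le_maxN {S : Finset ℕ} {y : ℕ} (h : y ∈ S) : y ≤ maxN S :=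
  Finset.le_sup (f := id) h

lemma maxN_mono {S T : Finset ℕ} (h : S ⊆ T) : maxN S ≤ maxN T :=
  Finset.sup_mono h

lemma minN_subset_ge {S T : Finset ℕ} (h : S ⊆ T) (hS : S.Nonempty) :
    minN T ≤ minN S := minN_le (h (minN_mem hS))

lemma minN_lt_of_mem_of_ne {S : Finset ℕ} {y : ℕ} (h : y ∈ S) (hne : y ≠ minN S) :
    minN S < y := lt_of_le_of_ne (minN_le h) (Ne.symm hne)

lemma mem_erase_minN {S : Finset ℕ} {y : ℕ} (h : y ∈ S.erase (minN S)) :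
    minN S < y := by
  rcases Finset.mem_erase.mp h with ⟨hne, hy⟩
  exact minN_lt_of_mem_of_ne hy hne

lemma minN_insert_of_lt {x : ℕ} {B : Finset ℕ} (h : ∀ b ∈ B, x < b) :
    minN (insert x B) = x := by
  apply le_antisymm (minN_le (Finset.mem_insert_self x B))
  have hmem := minN_mem (S := insert x B) ⟨x, Finset.mem_insert_self x B⟩
  rcases Finset.mem_insert.mp hmem with h1 | h2
  · omega
  · exact le_of_lt (h _ h2)

lemma erase_insert_of_lt {x : ℕ} {B : Finset ℕ} (h : ∀ b ∈ B, x < b) :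
    (insert x B).erase x = B := by
  have : x ∉ B := fun hx => lt_irrefl x (h x hx)
  rw [Finset.erase_insert this]

/-! ### SetBelow / ThetaApart monotonicity -/

lemma setBelow_mono {E E' F F' : Finset ℕ} (h : SetBelow E F) (hE : E' ⊆ E) (hF : F' ⊆ F) :
    SetBelow E' F' := fun x hx y hy => h x (hE hx) y (hF hy)

lemma thetaApart_mono' {E E' F F' : Finset ℕ} (h : ThetaApart θ E F)
    (hE : maxN E' ≤ maxN E) (hF1 : minN F ≤ minN F') (hF2 : maxN F' ≤ maxN F) :
    ThetaApart θ E' F' := by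
  intro x hx
  obtain ⟨y, hy, hz⟩ := h x (lt_of_lt_of_le hx hE)
  exact ⟨y, lt_of_lt_of_le hy hF1, fun z hzlt => hz z (lt_of_lt_of_le hzlt hF2)⟩

lemma thetaApart_mono {E E' F F' : Finset ℕ} (h : ThetaApart θ E F)
    (hE : E' ⊆ E) (hF : F' ⊆ F) (hF' : F'.Nonempty) :
    ThetaApart θ E' F' :=
  thetaApart_mono' h (maxN_mono hE) (minN_subset_ge hF hF') (maxN_mono hF)

lemma setBelow_lt_minN {E F : Finset ℕ} (h : SetBelow E F) {x : ℕ} (hx : x ∈ E)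
    (hF : F.Nonempty) : x < minN F := h x hx _ (minN_mem hF)

/-! ### MulK / MulSeq basic lemmas -/

lemma mulK_mono_class {L L' : Set (Finset ℕ)} (h : L ⊆ L') (k : ℕ) :
    MulK θ L k ⊆ MulK θ L' k := by
  rintro F ⟨V, h1, h2, h3⟩
  exact ⟨V, fun i => h (h1 i), h2, h3⟩

lemma mulK_mono_arity {L : Set (Finset ℕ)} {k k' : ℕ} (h : k' ≤ k) :
    MulK θ L k ⊆ MulK θ L k' := by
  rintro F ⟨V, h1, h2, h3⟩
  refine ⟨fun i => V (Fin.castLE h i), fun i => h1 _, fun i => h2 _, ?_⟩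
  intro i j hij
  exact h3 _ _ (by simpa using hij)

lemma mulK_upward {L : Set (Finset ℕ)} {k : ℕ} {F F' : Finset ℕ}
    (h : F ∈ MulK θ L k) (hFF : F ⊆ F') : F' ∈ MulK θ L k := by
  obtain ⟨V, h1, h2, h3⟩ := h
  exact ⟨V, h1, fun i => (h2 i).trans hFF, h3⟩

lemma mulSeq_nil {L : Set (Finset ℕ)} : MulSeq θ L [] = L := rfl

lemma mulSeq_cons {L : Set (Finset ℕ)} {k : ℕ} {τ : List ℕ} :
    MulSeq θ L (k :: τ) = MulSeq θ (MulK θ L k) τ := rfl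

lemma mulSeq_mono_class {L L' : Set (Finset ℕ)} (h : L ⊆ L') :
    ∀ τ : List ℕ, MulSeq θ L τ ⊆ MulSeq θ L' τ := by
  intro τ
  induction τ generalizing L L' with
  | nil => exact h
  | cons k τ ih => exact ih (mulK_mono_class h k)

/-- commuting the outermost layer of a replicated product -/
lemma mulSeq_rep_comm {k : ℕ} : ∀ (s : ℕ) (L : Set (Finset ℕ)),
    MulSeq θ (MulK θ L k) (List.replicate s k) = MulK θ (MulSeq θ L (List.replicate s k)) k := by
  intro s
  induction s with
  | zero => intro L; rfl
  | succ s ih =>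
    intro L
    have h1 : MulSeq θ (MulK θ L k) (List.replicate (s+1) k)
        = MulSeq θ (MulK θ (MulK θ L k) k) (List.replicate s k) := rfl
    rw [h1, ih (MulK θ L k)]
    rfl

lemma mulSeq_rep_succ {L : Set (Finset ℕ)} {k s : ℕ} :
    MulSeq θ L (List.replicate (s+1) k) = MulK θ (MulSeq θ L (List.replicate s k)) k := by
  show MulSeq θ (MulK θ L k) (List.replicate s k) = _
  exact mulSeq_rep_comm s L

lemma mulSeq_rep_mono_class {L L' : Set (Finset ℕ)} (h : L ⊆ L') (s k : ℕ) :
    MulSeq θ L (List.replicate s k) ⊆ MulSeq θ L' (List.replicate s k) :=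
  mulSeq_mono_class h _

/-- extract a member of `L` inside a replicated product (arity ≥ 1). -/
lemma exists_Lset_subset {L : Set (Finset ℕ)} {k : ℕ} (hk : 1 ≤ k) :
    ∀ (s : ℕ) (G : Finset ℕ), G ∈ MulSeq θ L (List.replicate s k) → ∃ P, P ∈ L ∧ P ⊆ G := by
  intro s
  induction s with
  | zero => intro G hG; exact ⟨G, hG, le_refl _⟩
  | succ s ih =>
    intro G hG
    rw [mulSeq_rep_succ] at hG
    obtain ⟨V, h1, h2, _⟩ := hG
    obtain ⟨P, hP1, hP2⟩ := ih (V ⟨0, hk⟩) (h1 _)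
    exact ⟨P, hP1, hP2.trans (h2 _)⟩

end Stmt15
namespace Stmt15

variable {θ : ℕ → ℕ → ℕ → Prop}

lemma mulSeq_rep_mono_arity {L : Set (Finset ℕ)} {k k' : ℕ} (h : k' ≤ k) :
    ∀ s, MulSeq θ L (List.replicate s k) ⊆ MulSeq θ L (List.replicate s k') := by
  intro s
  induction s with
  | zero => exact fun G hG => hG
  | succ s ih =>
    rw [mulSeq_rep_succ, mulSeq_rep_succ]
    exact fun G hG => mulK_mono_arity h (mulK_mono_class ih k hG)

lemma mulSeq_rep_upward {L : Set (Finset ℕ)} {k s : ℕ} (hs : 1 ≤ s) {F F' : Finset ℕ}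
    (h : F ∈ MulSeq θ L (List.replicate s k)) (hFF : F ⊆ F') :
    F' ∈ MulSeq θ L (List.replicate s k) := by
  obtain ⟨s', rfl⟩ := Nat.exists_eq_add_of_le hs
  rw [Nat.add_comm, mulSeq_rep_succ] at h ⊢
  exact mulK_upward h hFF

lemma mem_mulK_zero {L : Set (Finset ℕ)} (F : Finset ℕ) : F ∈ MulK θ L 0 :=
  ⟨Fin.elim0, fun i => i.elim0, fun i => i.elim0, fun i => i.elim0⟩

lemma mem_mulSeq_rep_zero_arity {L : Set (Finset ℕ)} {s : ℕ} (hs : 1 ≤ s) (F : Finset ℕ) :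
    F ∈ MulSeq θ L (List.replicate s 0) := by
  obtain ⟨s', rfl⟩ := Nat.exists_eq_add_of_le hs
  rw [Nat.add_comm, mulSeq_rep_succ]
  exact mem_mulK_zero F

/-! ### LargeStar basics -/

lemma largeStar_nonempty {m : ℕ} {S : Finset ℕ} (h : S ∈ LargeStar θ m) : S.Nonempty := by
  cases m with
  | zero => exact h
  | succ m => exact h.1

lemma largeStar_succ_iff {m : ℕ} {S : Finset ℕ} :
    S ∈ LargeStar θ (m+1) ↔ S.Nonempty ∧
      S.erase (minN S) ∈ MulSeq θ (LargeStar θ m) (List.replicate (m+1) (minN S)) := Iff.rfl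

lemma largeStar_upward {m : ℕ} {S T : Finset ℕ} (h : S ∈ LargeStar θ m) (hST : S ⊆ T) :
    T ∈ LargeStar θ m := by
  cases m with
  | zero => exact (largeStar_nonempty h).mono hST
  | succ m =>
    obtain ⟨hne, hmem⟩ := h
    have hTne : T.Nonempty := hne.mono hST
    refine ⟨hTne, ?_⟩
    have hmin : minN T ≤ minN S := minN_subset_ge hST hne
    have hsub : S.erase (minN S) ⊆ T.erase (minN T) := by
      intro y hy
      have hyS := Finset.mem_of_mem_erase hy
      have : minN S < y := mem_erase_minN hy
      exact Finset.mem_erase.mpr ⟨by omega, hST hyS⟩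
    exact mulSeq_rep_upward (by omega)
      (mulSeq_rep_mono_arity hmin _ hmem) hsub

lemma mulK_drop {L : Set (Finset ℕ)} (hL : ∀ {S T : Finset ℕ}, S ∈ L → S ⊆ T → T ∈ L)
    {k : ℕ} (hk : 1 ≤ k) {F : Finset ℕ} (h : F ∈ MulK θ L k) : F ∈ L := by
  obtain ⟨V, h1, h2, _⟩ := h
  exact hL (h1 ⟨0, hk⟩) (h2 _)

lemma largeStar_mono {m : ℕ} : LargeStar θ (m+1) ⊆ LargeStar θ m := by
  induction m with
  | zero => exact fun S h => largeStar_nonempty h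
  | succ m ih =>
    intro S hS
    obtain ⟨hne, hmem⟩ := hS
    refine ⟨hne, ?_⟩
    rcases Nat.eq_zero_or_pos (minN S) with h0 | hb
    · rw [h0]
      exact mem_mulSeq_rep_zero_arity (by omega) _
    rw [mulSeq_rep_succ] at hmem
    have step1 : S.erase (minN S) ∈ MulSeq θ (LargeStar θ (m+1)) (List.replicate (m+1) (minN S)) := by
      refine mulK_drop ?_ hb hmem
      intro A B hA hAB
      exact mulSeq_rep_upward (by omega) hA hAB
    exact mulSeq_rep_mono_class ih _ _ step1

lemma largeStar_mono_le {m m' : ℕ} (h : m' ≤ m) : LargeStar θ m ⊆ LargeStar θ m' := by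
  induction m with
  | zero => have : m' = 0 := by omega
            subst this; exact fun _ h => h
  | succ m ih =>
    rcases Nat.lt_or_ge m' (m+1) with hlt | hge
    · exact fun S hS => ih (by omega) (largeStar_mono hS)
    · have : m' = m + 1 := by omega
      subst this; exact fun _ h => h

end Stmt15
namespace Stmt15

variable {θ : ℕ → ℕ → ℕ → Prop}

lemma arith1 : ∀ x : ℕ, 3 ≤ x → (x + 1) * x < 4 ^ x := by
  intro x hx
  induction x with
  | zero => omega
  | succ x ih =>
    rcases Nat.lt_or_ge x 3 with h | h
    · interval_cases x <;> norm_num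
    · have h1 := ih h
      have h2 : (x + 2) * (x + 1) ≤ 4 * ((x + 1) * x) := by nlinarith
      calc (x + 1 + 1) * (x + 1) ≤ 4 * ((x + 1) * x) := h2
        _ < 4 * 4 ^ x := by omega
        _ = 4 ^ (x + 1) := by ring

lemma mulK_intro {L : Set (Finset ℕ)} {k : ℕ} (V : Fin k → Finset ℕ)
    (h1 : ∀ i, V i ∈ L)
    (h2 : ∀ i j, i < j → SetBelow (V i) (V j) ∧ ThetaApart θ (V i) (V j)) :
    (Finset.univ.biUnion V) ∈ MulK θ L k :=
  ⟨V, h1, fun i => Finset.subset_biUnion_of_mem V (Finset.mem_univ i), h2⟩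

lemma mulSeq_largeStar_nonempty {ℓ s k : ℕ} (hk : 1 ≤ k) {B : Finset ℕ}
    (h : B ∈ MulSeq θ (LargeStar θ ℓ) (List.replicate s k)) : B.Nonempty := by
  obtain ⟨P, hP1, hP2⟩ := exists_Lset_subset hk s B h
  exact (largeStar_nonempty hP1).mono hP2

/-- a member of `MulK θ L k`, `k ≥ 1`, unpacked -/
lemma mulK_elim {L : Set (Finset ℕ)} {k : ℕ} {F : Finset ℕ} (h : F ∈ MulK θ L k) :
    ∃ V : Fin k → Finset ℕ, (∀ i, V i ∈ L) ∧ (∀ i, V i ⊆ F) ∧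
      ∀ i j, i < j → SetBelow (V i) (V j) ∧ ThetaApart θ (V i) (V j) := h

def Mono {κ : Type} (C : ℕ → κ) (i : κ) (S : Finset ℕ) : Prop := ∀ y ∈ S, C y = i

lemma mono_biUnion {κ : Type} {C : ℕ → κ} {i : κ} {k : ℕ} {V : Fin k → Finset ℕ}
    (h : ∀ j, Mono C i (V j)) : Mono C i (Finset.univ.biUnion V) := by
  intro y hy
  obtain ⟨j, _, hj⟩ := Finset.mem_biUnion.mp hy
  exact h j y hj

section Core

variable {κ : Type} [Fintype κ] [DecidableEq κ]

/-- the conclusion of the refinement core for `L_{ℓ+2}`-sets -/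
def CoreStmt (θ : ℕ → ℕ → ℕ → Prop) (amb : Finset ℕ) (C : ℕ → κ) (ℓ : ℕ) : Prop :=
  ∀ Q : Finset ℕ, Q ⊆ amb → (∀ y ∈ Q, Fintype.card κ < y) → Q ∈ LargeStar θ (ℓ+2) →
  ∃ i : κ, (∃ y ∈ Q, C y = i) ∧ ∀ x : ℕ, C x = i → Fintype.card κ ≤ x → 3 ≤ x →
    4 ^ x < minN Q →
    ∃ B, B ⊆ Q ∧ Mono C i B ∧ B ∈ MulSeq θ (LargeStar θ ℓ) (List.replicate (ℓ+1) x)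

/-- the conclusion of the refinement core for depth-`s` products over `L_{ℓ+1}`-sets -/
def NodeStmt (θ : ℕ → ℕ → ℕ → Prop) (amb : Finset ℕ) (C : ℕ → κ) (ℓ s : ℕ) : Prop :=
  ∀ (q : ℕ) (D : Finset ℕ), D ⊆ amb → (∀ y ∈ D, Fintype.card κ < y) → Fintype.card κ < q →
  D ∈ MulSeq θ (LargeStar θ (ℓ+1)) (List.replicate s q) →
  ∃ i : κ, (∃ y ∈ D, C y = i) ∧ ∀ x : ℕ, C x = i → Fintype.card κ ≤ x → 3 ≤ x →
    (x + 1) * Fintype.card κ ≤ q → 4 ^ x < minN D →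
    ∃ B, B ⊆ D ∧ Mono C i B ∧ B ∈ MulSeq θ (LargeStar θ ℓ) (List.replicate (s-1) x)

end Core
end Stmt15
namespace Stmt15

section Core

variable {θ : ℕ → ℕ → ℕ → Prop} {κ : Type} [Fintype κ] [DecidableEq κ]
variable {amb : Finset ℕ} {C : ℕ → κ}

lemma node_lemma (hsp : ExpSparse amb) (hamb3 : ∀ y ∈ amb, 3 ≤ y)
    (ℓ : ℕ) (hprev : ℓ = 0 ∨ CoreStmt θ amb C (ℓ - 1)) :
    ∀ s, 1 ≤ s → NodeStmt θ amb C ℓ s := by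
  have hr0 : 0 < Fintype.card κ := Fintype.card_pos_iff.mpr ⟨C 0⟩
  intro s
  induction s with
  | zero => omega
  | succ s ih =>
    intro _
    rcases Nat.eq_zero_or_pos s with rfl | hs
    · -- base case s = 1 : D ∈ MulK θ (LargeStar θ (ℓ+1)) q
      intro q D hDamb hDκ hκq hD
      have hq1 : 1 ≤ q := by omega
      obtain ⟨V, h1, h2, h3⟩ := hD
      have hVne : ∀ t : Fin q, (V t).Nonempty := fun t => largeStar_nonempty (h1 t)
      have hDne : D.Nonempty := (hVne ⟨0, hq1⟩).mono (h2 _)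
      cases ℓ with
      | zero =>
        refine ⟨C (minN D), ⟨minN D, minN_mem hDne, rfl⟩, ?_⟩
        intro x _ _ _ _ _
        refine ⟨{minN D}, ?_, ?_, ?_⟩
        · simpa using minN_mem hDne
        · intro y hy; rw [Finset.mem_singleton] at hy; rw [hy]
        · exact Finset.singleton_nonempty _
      | succ ℓ' =>
        have hcore : CoreStmt θ amb C ℓ' := by
          rcases hprev with h | h
          · omega
          · rwa [Nat.add_sub_cancel] at h
        choose iF hF using fun t : Fin q =>
          hcore (V t) ((h2 t).trans hDamb) (fun y hy => hDκ y (h2 t hy)) (h1 t)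
        set pool : Fin q → Finset ℕ :=
          fun t => insert (minN D) ((Finset.univ.filter (fun s => s < t)).biUnion V) with hpool
        have hpoolD : ∀ t, pool t ⊆ D := by
          intro t z hz
          rcases Finset.mem_insert.mp hz with rfl | hz
          · exact minN_mem hDne
          · obtain ⟨u, _, hu⟩ := Finset.mem_biUnion.mp hz
            exact h2 u hu
        have hpool_lt : ∀ t : Fin q, 0 < t.val → ∀ z ∈ pool t, z < minN (V t) := by
          intro t ht z hz
          rcases Finset.mem_insert.mp hz with rfl | hz
          · have h01 : minN (V ⟨0, hq1⟩) < minN (V t) :=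
              setBelow_lt_minN (h3 ⟨0, hq1⟩ t (by rw [Fin.lt_def]; exact ht)).1
                (minN_mem (hVne _)) (hVne t)
            exact lt_of_le_of_lt (minN_subset_ge (h2 _) (hVne _)) h01
          · obtain ⟨u, hu1, hu2⟩ := Finset.mem_biUnion.mp hz
            rw [Finset.mem_filter] at hu1
            exact setBelow_lt_minN (h3 u t hu1.2).1 hu2 (hVne t)
        have claim : ∃ t : Fin q, 0 < t.val ∧ ∃ x ∈ pool t, C x = iF t := by
          by_contra hcon
          push_neg at hcon
          have key : ∀ a b : Fin q, a < b →
              (if a.val = 0 then C (minN D) else iF a) ≠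
              (if b.val = 0 then C (minN D) else iF b) := by
            intro a b hab
            have habv : a.val < b.val := Fin.lt_def.mp hab
            have hb0 : ¬ b.val = 0 := by omega
            rw [if_neg hb0]
            have hbpos : 0 < b.val := by omega
            by_cases ha0 : a.val = 0
            · rw [if_pos ha0]
              exact hcon b hbpos (minN D) (Finset.mem_insert_self _ _)
            · rw [if_neg ha0]
              obtain ⟨y, hy1, hy2⟩ := (hF a).1
              have hymem : y ∈ pool b :=
                Finset.mem_insert_of_mem
                  (Finset.mem_biUnion.mpr ⟨a, Finset.mem_filter.mpr ⟨Finset.mem_univ _, hab⟩, hy1⟩)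
              intro hEq
              exact hcon b hbpos y hymem (hy2.trans hEq)
          have hinj : Function.Injective
              (fun t : Fin q => if t.val = 0 then C (minN D) else iF t) := by
            intro a b hab
            by_contra hne
            rcases lt_or_gt_of_ne hne with h | h
            · exact key a b h hab
            · exact key b a h hab.symm
          have hcard := Fintype.card_le_of_injective _ hinj
          rw [Fintype.card_fin] at hcard
          omega
        obtain ⟨t, ht0, x, hxpool, hxC⟩ := claim
        have hxD : x ∈ D := hpoolD t hxpool
        have hxamb : x ∈ amb := hDamb hxD
        have hxlt : x < minN (V t) := hpool_lt t ht0 x hxpool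
        have hminVamb : minN (V t) ∈ amb := hDamb (h2 t (minN_mem (hVne t)))
        have hsparse : 4 ^ x < minN (V t) := hsp x hxamb (minN (V t)) hminVamb hxlt
        obtain ⟨B', hB'sub, hB'mono, hB'mem⟩ :=
          (hF t).2 x hxC (le_of_lt (hDκ x hxD)) (hamb3 x hxamb) hsparse
        have hxB' : ∀ b ∈ B', x < b := fun b hb => lt_of_lt_of_le hxlt (minN_le (hB'sub hb))
        refine ⟨iF t, ⟨x, hxD, hxC⟩, ?_⟩
        intro x' _ _ _ _ _
        refine ⟨insert x B', ?_, ?_, ?_⟩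
        · intro z hz
          rcases Finset.mem_insert.mp hz with rfl | hz
          · exact hxD
          · exact h2 t (hB'sub hz)
        · intro y hy
          rcases Finset.mem_insert.mp hy with rfl | hy
          · exact hxC
          · exact hB'mono y hy
        · show insert x B' ∈ LargeStar θ (ℓ' + 1)
          refine ⟨⟨x, Finset.mem_insert_self _ _⟩, ?_⟩
          rw [minN_insert_of_lt hxB', erase_insert_of_lt hxB']
          exact hB'mem
    · -- inductive step: arity s+1 with s ≥ 1
      intro q D hDamb hDκ hκq hD
      rw [mulSeq_rep_succ] at hD
      obtain ⟨V, h1, h2, h3⟩ := hD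
      have hq1 : 1 ≤ q := by omega
      have hVne : ∀ t : Fin q, (V t).Nonempty :=
        fun t => mulSeq_largeStar_nonempty hq1 (h1 t)
      have hDne : D.Nonempty := (hVne ⟨0, hq1⟩).mono (h2 _)
      choose iF hF using fun t : Fin q =>
        ih hs q (V t) ((h2 t).trans hDamb) (fun y hy => hDκ y (h2 t hy)) hκq (h1 t)
      -- plurality
      set T : κ → Finset (Fin q) := fun i => Finset.univ.filter (fun t => iF t = i) with hT
      obtain ⟨i₀, -, hmax⟩ := Finset.exists_max_image (Finset.univ : Finset κ)
        (fun i => (T i).card) ⟨C 0, Finset.mem_univ _⟩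
      have hsum : q ≤ Fintype.card κ * (T i₀).card := by
        have h1' : (Finset.univ : Finset (Fin q)).card
            = ∑ i : κ, (T i).card := by
          apply Finset.card_eq_sum_card_fiberwise
          intro t _; exact Finset.mem_univ _
        have h2' : ∑ i : κ, (T i).card ≤ ∑ _i : κ, (T i₀).card :=
          Finset.sum_le_sum (fun i _ => hmax i (Finset.mem_univ i))
        rw [Finset.sum_const, smul_eq_mul] at h2'
        calc q = (Finset.univ : Finset (Fin q)).card := (Finset.card_fin q).symm
          _ = ∑ i : κ, (T i).card := h1'
          _ ≤ (Finset.univ : Finset κ).card * (T i₀).card := h2'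
          _ = Fintype.card κ * (T i₀).card := rfl
      have hfib1 : 1 ≤ (T i₀).card := by
        by_contra h
        push_neg at h
        interval_cases h' : (T i₀).card <;> omega
      refine ⟨i₀, ?_, ?_⟩
      · obtain ⟨t₀, ht₀⟩ := Finset.card_pos.mp hfib1
        obtain ⟨y, hy1, hy2⟩ := (hF t₀).1
        exact ⟨y, h2 t₀ hy1, hy2.trans (Finset.mem_filter.mp ht₀).2⟩
      · intro x hxC hκx h3x hxq hxmin
        have hxT : x < (T i₀).card := by
          have h5 : (x + 1) * Fintype.card κ ≤ Fintype.card κ * (T i₀).card :=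
            le_trans hxq hsum
          rw [Nat.mul_comm (x+1)] at h5
          have := Nat.le_of_mul_le_mul_left h5 hr0
          omega
        set e : Fin (T i₀).card ↪o Fin q := (T i₀).orderEmbOfFin rfl with he
        set sel : Fin x → Fin q := fun j => e (Fin.castLE (le_of_lt hxT) j) with hsel
        have hselT : ∀ j, sel j ∈ T i₀ := fun j => Finset.orderEmbOfFin_mem _ rfl _
        have hsel_i : ∀ j, iF (sel j) = i₀ :=
          fun j => (Finset.mem_filter.mp (hselT j)).2
        have hselmono : ∀ j j' : Fin x, j < j' → sel j < sel j' := by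
          intro j j' hjj
          apply e.strictMono
          rw [Fin.lt_def, Fin.coe_castLE, Fin.coe_castLE]
          exact Fin.lt_def.mp hjj
        have hhv : ∀ j : Fin x, ∃ B, B ⊆ V (sel j) ∧ Mono C i₀ B ∧
            B ∈ MulSeq θ (LargeStar θ ℓ) (List.replicate (s-1) x) := by
          intro j
          obtain ⟨B, hB1, hB2, hB3⟩ := (hF (sel j)).2 x (by rw [hsel_i j] at *; exact hxC)
            hκx h3x hxq
            (lt_of_lt_of_le hxmin (minN_subset_ge (h2 _) (hVne _)))
          exact ⟨B, hB1, by rwa [hsel_i j] at hB2, hB3⟩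
        choose W hW1 hW2 hW3 using hhv
        have hWne : ∀ j, (W j).Nonempty :=
          fun j => mulSeq_largeStar_nonempty (by omega : 1 ≤ x) (hW3 j)
        refine ⟨Finset.univ.biUnion W, ?_, mono_biUnion hW2, ?_⟩
        · intro z hz
          obtain ⟨j, _, hj⟩ := Finset.mem_biUnion.mp hz
          exact h2 _ (hW1 j hj)
        · have hrw : (s + 1) - 1 = (s - 1) + 1 := by omega
          rw [hrw, mulSeq_rep_succ]
          apply mulK_intro W hW3
          intro j j' hjj
          have hVV := h3 _ _ (hselmono j j' hjj)
          constructor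
          · exact setBelow_mono hVV.1 (hW1 j) (hW1 j')
          · exact thetaApart_mono hVV.2 (hW1 j) (hW1 j') (hWne j')

end Core
end Stmt15
namespace Stmt15

section Core

variable {θ : ℕ → ℕ → ℕ → Prop} {κ : Type} [Fintype κ] [DecidableEq κ]
variable {amb : Finset ℕ} {C : ℕ → κ}

lemma core_of_node (ℓ : ℕ) (hnode : NodeStmt θ amb C ℓ (ℓ+2)) :
    CoreStmt θ amb C ℓ := by
  intro Q hQamb hQκ hQL
  obtain ⟨hQne, hQmem⟩ := hQL
  have hκq : Fintype.card κ < minN Q := hQκ _ (minN_mem hQne)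
  have hDsub : Q.erase (minN Q) ⊆ Q := Finset.erase_subset _ _
  obtain ⟨i, hreal, hharv⟩ := hnode (minN Q) (Q.erase (minN Q)) (hDsub.trans hQamb)
    (fun y hy => hQκ y (hDsub hy)) hκq hQmem
  refine ⟨i, ?_, ?_⟩
  · obtain ⟨y, hy1, hy2⟩ := hreal
    exact ⟨y, hDsub hy1, hy2⟩
  · intro x hxC hκx h3x hxmin
    have hDne : (Q.erase (minN Q)).Nonempty :=
      mulSeq_largeStar_nonempty (by omega : 1 ≤ minN Q) hQmem
    have harr : (x + 1) * Fintype.card κ ≤ minN Q := by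
      have h1 := arith1 x h3x
      have h2 : (x+1) * Fintype.card κ ≤ (x+1) * x := Nat.mul_le_mul_left _ hκx
      omega
    have hminD : 4 ^ x < minN (Q.erase (minN Q)) :=
      lt_of_lt_of_le hxmin (minN_subset_ge hDsub hDne)
    obtain ⟨B, hB1, hB2, hB3⟩ := hharv x hxC hκx h3x harr hminD
    refine ⟨B, hB1.trans hDsub, hB2, ?_⟩
    have : (ℓ + 2) - 1 = ℓ + 1 := by omega
    rwa [this] at hB3

lemma main_core (hsp : ExpSparse amb) (hamb3 : ∀ y ∈ amb, 3 ≤ y) :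
    ∀ ℓ, CoreStmt θ amb C ℓ := by
  intro ℓ
  induction ℓ with
  | zero =>
    exact core_of_node 0 (node_lemma hsp hamb3 0 (Or.inl rfl) 2 (by omega))
  | succ ℓ ih =>
    refine core_of_node (ℓ+1) (node_lemma hsp hamb3 (ℓ+1) (Or.inr ?_) (ℓ+3) (by omega))
    rwa [Nat.add_sub_cancel]

/-- The refinement ("pigeonhole") lemma: an `ω^{m+2}`-large*(θ) subset of an
exp-sparse set contains a monochromatic `ω^m`-large*(θ) subset, for any colouring
with fewer than `min Z` colours. -/
lemma mono_refine (hsp : ExpSparse amb) (hamb3 : ∀ y ∈ amb, 3 ≤ y)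
    (m : ℕ) (Z : Finset ℕ) (hZamb : Z ⊆ amb) (hZL : Z ∈ LargeStar θ (m+2))
    (hκ : Fintype.card κ < minN Z) :
    ∃ i : κ, ∃ Y, Y ⊆ Z ∧ Y ∈ LargeStar θ m ∧ Mono C i Y := by
  have hZne : Z.Nonempty := largeStar_nonempty hZL
  have hZκ : ∀ y ∈ Z, Fintype.card κ < y := fun y hy => lt_of_lt_of_le hκ (minN_le hy)
  cases m with
  | zero =>
    exact ⟨C (minN Z), {minN Z}, by simpa using minN_mem hZne,
      Finset.singleton_nonempty _,
      fun y hy => by rw [Finset.mem_singleton] at hy; rw [hy]⟩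
  | succ m =>
    -- unroll the top layer
    obtain ⟨-, hZmem⟩ := hZL
    set b := minN Z with hb
    have hb3 : 3 ≤ b := hamb3 _ (hZamb (minN_mem hZne))
    rw [mulSeq_rep_succ] at hZmem
    obtain ⟨V, h1, h2, h3⟩ := hZmem
    have hbpos : 1 ≤ b := by omega
    have hVne : ∀ t : Fin b, (V t).Nonempty :=
      fun t => mulSeq_largeStar_nonempty hbpos (h1 t)
    -- extract an L_{m+1}-set inside each V t
    choose W hW1 hW2 using fun t : Fin b => exists_Lset_subset hbpos _ _ (h1 t)
    have hWne : ∀ t, (W t).Nonempty := fun t => largeStar_nonempty (hW1 t)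
    have hWZ : ∀ t, W t ⊆ Z := fun t =>
      (hW2 t).trans ((h2 t).trans (Finset.erase_subset _ _))
    have hWamb : ∀ t, W t ⊆ amb := fun t => (hWZ t).trans hZamb
    -- serving colours
    choose iF hF using fun t : Fin b =>
      main_core hsp hamb3 m (W t) (hWamb t) (fun y hy => hZκ y (hWZ t hy)) (hW1 t)
    set pool : Fin b → Finset ℕ :=
      fun t => insert b ((Finset.univ.filter (fun s => s < t)).biUnion W) with hpool
    have hpoolZ : ∀ t, pool t ⊆ Z := by
      intro t z hz
      rcases Finset.mem_insert.mp hz with rfl | hz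
      · exact minN_mem hZne
      · obtain ⟨u, _, hu⟩ := Finset.mem_biUnion.mp hz
        exact hWZ u hu
    have hpool_lt : ∀ t : Fin b, ∀ z ∈ pool t, z < minN (W t) := by
      intro t z hz
      rcases Finset.mem_insert.mp hz with rfl | hz
      · have : minN (W t) ∈ Z.erase b := (h2 t) (hW2 t (minN_mem (hWne t)))
        exact mem_erase_minN this
      · obtain ⟨u, hu1, hu2⟩ := Finset.mem_biUnion.mp hz
        rw [Finset.mem_filter] at hu1
        have hsb : SetBelow (V u) (V t) := (h3 u t hu1.2).1
        exact setBelow_lt_minN (setBelow_mono hsb (hW2 u) (hW2 t)) hu2 (hWne t)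
    have claim : ∃ t : Fin b, ∃ x ∈ pool t, C x = iF t := by
      by_contra hcon
      push_neg at hcon
      have key : ∀ a b' : Fin b, a < b' → iF a ≠ iF b' := by
        intro a b' hab
        obtain ⟨y, hy1, hy2⟩ := (hF a).1
        have hymem : y ∈ pool b' :=
          Finset.mem_insert_of_mem
            (Finset.mem_biUnion.mpr ⟨a, Finset.mem_filter.mpr ⟨Finset.mem_univ _, hab⟩, hy1⟩)
        intro hEq
        exact hcon b' y hymem (hy2.trans hEq)
      have hbmem : ∀ t : Fin b, C b ≠ iF t :=
        fun t => hcon t b (Finset.mem_insert_self _ _)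
      have hinj : Function.Injective iF := by
        intro a b' hab
        by_contra hne
        rcases lt_or_gt_of_ne hne with h | h
        · exact key a b' h hab
        · exact key b' a h hab.symm
      -- iF is injective and misses the colour C b, so card κ ≥ b + 1
      have h5 : Fintype.card κ ≥ b := by
        have := Fintype.card_le_of_injective iF hinj
        rwa [Fintype.card_fin] at this
      omega
    obtain ⟨t, x, hxpool, hxC⟩ := claim
    have hxZ : x ∈ Z := hpoolZ t hxpool
    have hxamb : x ∈ amb := hZamb hxZ
    have hxlt : x < minN (W t) := hpool_lt t x hxpool
    have hsparse : 4 ^ x < minN (W t) :=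
      hsp x hxamb _ (hWamb t (minN_mem (hWne t))) hxlt
    obtain ⟨B, hB1, hB2, hB3⟩ :=
      (hF t).2 x hxC (le_of_lt (hZκ x hxZ)) (hamb3 x hxamb) hsparse
    have hxB : ∀ v ∈ B, x < v := fun v hv => lt_of_lt_of_le hxlt (minN_le (hB1 hv))
    refine ⟨iF t, insert x B, ?_, ?_, ?_⟩
    · intro z hz
      rcases Finset.mem_insert.mp hz with rfl | hz
      · exact hxZ
      · exact hWZ t (hB1 hz)
    · refine ⟨⟨x, Finset.mem_insert_self _ _⟩, ?_⟩
      rw [minN_insert_of_lt hxB, erase_insert_of_lt hxB]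
      exact hB3
    · intro y hy
      rcases Finset.mem_insert.mp hy with rfl | hy
      · exact hxC
      · exact hB2 y hy

end Core
end Stmt15
namespace Stmt15

section Tree

variable {θ : ℕ → ℕ → ℕ → Prop}

lemma mulSeq_children {L : Set (Finset ℕ)} {d k : ℕ} {F : Finset ℕ}
    (h : F ∈ MulSeq θ L (List.replicate (k+1) d)) :
    ∃ V : Fin d → Finset ℕ, (∀ a, V a ∈ MulSeq θ L (List.replicate k d)) ∧
      (∀ a, V a ⊆ F) ∧
      ∀ a b, a < b → SetBelow (V a) (V b) ∧ ThetaApart θ (V a) (V b) := by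
  rw [mulSeq_rep_succ] at h; exact h

variable (θ)

open Classical in
/-- the `a`-th child of a node of the `d`-ary tree of depth-`(k+1)` structure -/
noncomputable def childF (n d : ℕ) (F : Finset ℕ) (k : ℕ) (a : Fin d) : Finset ℕ :=
  if h : F ∈ MulSeq θ (LargeStar θ (n+2)) (List.replicate (k+1) d) then
    Classical.choose (mulSeq_children h) a else ∅

/-- the subtree node addressed by `σ` -/
noncomputable def nodeF (n d : ℕ) : Finset ℕ → ℕ → List (Fin d) → Finset ℕ
  | F, _, [] => F
  | F, 0, _ :: _ => F
  | F, (k+1), a :: σ => nodeF n d (childF θ n d F k a) k σ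

variable {n d : ℕ}

lemma nodeF_nil {F : Finset ℕ} {k : ℕ} : nodeF θ n d F k [] = F := by
  cases k <;> simp [nodeF]

lemma nodeF_cons {F : Finset ℕ} {k : ℕ} {a : Fin d} {σ : List (Fin d)} :
    nodeF θ n d F (k+1) (a :: σ) = nodeF θ n d (childF θ n d F k a) k σ := by
  simp [nodeF]

lemma childF_spec {F : Finset ℕ} {k : ℕ}
    (h : F ∈ MulSeq θ (LargeStar θ (n+2)) (List.replicate (k+1) d)) :
    (∀ a, childF θ n d F k a ∈ MulSeq θ (LargeStar θ (n+2)) (List.replicate k d)) ∧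
    (∀ a, childF θ n d F k a ⊆ F) ∧
    (∀ a b, a < b → SetBelow (childF θ n d F k a) (childF θ n d F k b) ∧
      ThetaApart θ (childF θ n d F k a) (childF θ n d F k b)) := by
  have := Classical.choose_spec (mulSeq_children h)
  simp only [childF, dif_pos h]
  exact this

lemma cls_nonempty (hd : 1 ≤ d) {j : ℕ} {G : Finset ℕ}
    (h : G ∈ MulSeq θ (LargeStar θ (n+2)) (List.replicate j d)) : G.Nonempty :=
  mulSeq_largeStar_nonempty hd h

lemma nodeF_mem : ∀ (σ : List (Fin d)) (F : Finset ℕ) (k : ℕ), σ.length ≤ k →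
    F ∈ MulSeq θ (LargeStar θ (n+2)) (List.replicate k d) →
    nodeF θ n d F k σ ∈ MulSeq θ (LargeStar θ (n+2)) (List.replicate (k - σ.length) d) ∧
    nodeF θ n d F k σ ⊆ F := by
  intro σ
  induction σ with
  | nil =>
    intro F k _ hF
    rw [nodeF_nil]
    exact ⟨by simpa using hF, Finset.Subset.refl F⟩
  | cons a σ ih =>
    intro F k hlen hF
    cases k with
    | zero => simp at hlen
    | succ k =>
      have hspec := childF_spec θ hF
      have hlen' : σ.length ≤ k := by simpa using hlen
      obtain ⟨h1, h2⟩ := ih (childF θ n d F k a) k hlen' (hspec.1 a)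
      have hlc : k + 1 - (a :: σ).length = k - σ.length := by simp
      rw [hlc, nodeF_cons]
      exact ⟨h1, h2.trans (hspec.2.1 a)⟩

lemma nodeF_sep (hd : 1 ≤ d) : ∀ (σ τ : List (Fin d)) (F : Finset ℕ) (k : ℕ),
    σ.length = τ.length → σ.length ≤ k →
    F ∈ MulSeq θ (LargeStar θ (n+2)) (List.replicate k d) →
    List.Lex (· < ·) σ τ →
    SetBelow (nodeF θ n d F k σ) (nodeF θ n d F k τ) ∧
      ThetaApart θ (nodeF θ n d F k σ) (nodeF θ n d F k τ) := by
  intro σ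
  induction σ with
  | nil =>
    intro τ F k hlen _ _ hlex
    have : τ = [] := List.length_eq_zero_iff.mp hlen.symm
    subst this
    cases hlex
  | cons a σ ih =>
    intro τ F k hlen hk hF hlex
    cases τ with
    | nil => simp at hlen
    | cons b τ =>
      cases k with
      | zero => simp at hk
      | succ k =>
        have hspec := childF_spec θ hF
        have hlenσ : σ.length ≤ k := by simpa using hk
        have hlenστ : σ.length = τ.length := by simpa using hlen
        rw [nodeF_cons, nodeF_cons]
        cases hlex with
        | cons hlex' =>
          exact ih τ (childF θ n d F k a) k hlenστ hlenσ (hspec.1 a) hlex'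
        | rel hab =>
          have hsep := hspec.2.2 a b hab
          have hσsub : nodeF θ n d (childF θ n d F k a) k σ ⊆ childF θ n d F k a :=
            (nodeF_mem θ σ _ k hlenσ (hspec.1 a)).2
          have hτmem := nodeF_mem θ τ (childF θ n d F k b) k (by omega) (hspec.1 b)
          have hτne : (nodeF θ n d (childF θ n d F k b) k τ).Nonempty :=
            cls_nonempty θ hd hτmem.1
          exact ⟨setBelow_mono hsep.1 hσsub hτmem.2,
            thetaApart_mono hsep.2 hσsub hτmem.2 hτne⟩

lemma nodeF_prefix_subset : ∀ (σ ρ : List (Fin d)) (F : Finset ℕ) (k : ℕ),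
    ρ.length ≤ k → F ∈ MulSeq θ (LargeStar θ (n+2)) (List.replicate k d) →
    σ <+: ρ → nodeF θ n d F k ρ ⊆ nodeF θ n d F k σ := by
  intro σ
  induction σ with
  | nil =>
    intro ρ F k hlen hF _
    rw [nodeF_nil]
    exact (nodeF_mem θ ρ F k hlen hF).2
  | cons a σ ih =>
    intro ρ F k hlen hF hpre
    obtain ⟨rest, rfl⟩ := hpre
    cases k with
    | zero => simp at hlen
    | succ k =>
      have hspec := childF_spec θ hF
      rw [List.cons_append, nodeF_cons, nodeF_cons]
      exact ih (σ ++ rest) (childF θ n d F k a) k (by simp at hlen ⊢; omega)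
        (hspec.1 a) ⟨rest, rfl⟩

end Tree
end Stmt15
namespace Stmt15

/-! ### the list of all words of length `k` over `Fin d`, in lexicographic order -/

def allLists (d : ℕ) : ℕ → List (List (Fin d))
  | 0 => [[]]
  | k+1 => (List.finRange d).flatMap (fun a => (allLists d k).map (a :: ·))

lemma mem_allLists {d k : ℕ} {σ : List (Fin d)} : σ ∈ allLists d k ↔ σ.length = k := by
  induction k generalizing σ with
  | zero =>
    simp [allLists, List.length_eq_zero_iff]
  | succ k ih =>
    simp only [allLists, List.mem_flatMap, List.mem_map]
    constructor
    · rintro ⟨a, -, ρ, hρ, rfl⟩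
      simp [ih.mp hρ]
    · intro hlen
      cases σ with
      | nil => simp at hlen
      | cons a ρ =>
        exact ⟨a, List.mem_finRange a, ρ, ih.mpr (by simpa using hlen), rfl⟩

lemma pairwise_flatMap {α β : Type*} {R : β → β → Prop} {l : List α} {f : α → List β}
    (h1 : ∀ a ∈ l, (f a).Pairwise R)
    (h2 : l.Pairwise (fun a b => ∀ x ∈ f a, ∀ y ∈ f b, R x y)) :
    (l.flatMap f).Pairwise R := by
  induction l with
  | nil => simp
  | cons a l ih =>
    rw [List.flatMap_cons, List.pairwise_append]
    rw [List.pairwise_cons] at h2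
    refine ⟨h1 a (List.mem_cons_self), ih (fun b hb => h1 b (List.mem_cons_of_mem a hb)) h2.2, ?_⟩
    intro x hx y hy
    obtain ⟨b, hb, hyb⟩ := List.mem_flatMap.mp hy
    exact h2.1 b hb x hx y hyb

lemma pairwise_allLists (d k : ℕ) : (allLists d k).Pairwise (List.Lex (· < ·)) := by
  induction k with
  | zero => simp [allLists]
  | succ k ih =>
    apply pairwise_flatMap
    · intro a _
      exact ih.map _ (fun σ τ h => List.Lex.cons h)
    · have := List.pairwise_lt_finRange d
      apply this.imp_of_mem
      intro a b _ _ hab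
      intro x hx y hy
      obtain ⟨σ, -, rfl⟩ := List.mem_map.mp hx
      obtain ⟨τ, -, rfl⟩ := List.mem_map.mp hy
      exact List.Lex.rel hab

lemma allLists_length (d k : ℕ) : (allLists d k).length = d ^ k := by
  induction k with
  | zero => simp [allLists]
  | succ k ih =>
    rw [allLists, List.length_flatMap]
    have h1 : List.map (fun a => (List.map (fun x => a :: x) (allLists d k)).length)
        (List.finRange d) = List.map (fun _ => d ^ k) (List.finRange d) := by
      apply List.map_congr_left
      intro a _
      simp [Function.comp, ih]
    rw [h1, List.map_const', List.sum_replicate, smul_eq_mul, List.length_finRange,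
      pow_succ, Nat.mul_comm]

lemma lex_irrefl {d : ℕ} (σ : List (Fin d)) : ¬ List.Lex (· < ·) σ σ :=
  fun h => (Std.Irrefl.irrefl (r := List.Lex ((· < ·) : Fin d → Fin d → Prop)) σ) h

lemma lex_asymm {d : ℕ} {σ τ : List (Fin d)} (h : List.Lex (· < ·) σ τ) :
    ¬ List.Lex (· < ·) τ σ :=
  Std.Asymm.asymm (r := List.Lex ((· < ·) : Fin d → Fin d → Prop)) σ τ h

lemma lex_total {d : ℕ} {σ τ : List (Fin d)} (h : σ ≠ τ) :
    List.Lex (· < ·) σ τ ∨ List.Lex (· < ·) τ σ := by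
  rcases (trichotomous_of (List.Lex ((· < ·) : Fin d → Fin d → Prop)) σ τ) with
    h1 | h1 | h1
  · exact Or.inl h1
  · exact absurd h1 h
  · exact Or.inr h1

lemma allLists_nodup (d k : ℕ) : (allLists d k).Nodup :=
  (pairwise_allLists d k).imp (fun {a b} h => by
    intro hEq; subst hEq; exact lex_irrefl _ h)

end Stmt15
namespace Stmt15

section Assembly

variable (θ : ℕ → ℕ → ℕ → Prop) (n d : ℕ) (X : Finset ℕ) (f : Finset ℕ → Fin 2)

/-- the leaf / node finsets of the extracted tree -/
noncomputable def ZZ (σ : List (Fin d)) : Finset ℕ := nodeF θ n d X n σ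

/-- all length-`n` words lexicographically after `σ` -/
def LATERS (σ : List (Fin d)) : Finset (List (Fin d)) :=
  (allLists d n).toFinset.filter (fun τ => List.Lex (· < ·) σ τ)

/-- the colour space used to refine the group indexed by `σ` -/
abbrev kT (σ : List (Fin d)) : Type :=
  (↥(X.filter (fun v => v < minN (ZZ θ n d X σ))) → Fin 2) ×
    (↥(LATERS n d σ) → Fin 2)

/-- the colouring used to refine the group indexed by `σ`, given the
assignment `G` of (group, trace-function) to later indices -/
noncomputable def colC (G : List (Fin d) → Finset ℕ × (ℕ → Fin 2)) (σ : List (Fin d)) :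
    ℕ → kT θ n d X σ :=
  fun y => (fun x => f {(x : ℕ), y}, fun τ => (G τ.val).2 y)

/-- conditions guaranteeing that the refinement of group `σ` succeeds -/
def COND (σ : List (Fin d)) : Prop :=
  ExpSparse X ∧ (∀ y ∈ X, 3 ≤ y) ∧ ZZ θ n d X σ ⊆ X ∧
    ZZ θ n d X σ ∈ LargeStar θ (n+2) ∧
    Fintype.card (kT θ n d X σ) < minN (ZZ θ n d X σ)

open Classical in
/-- refine one group -/
noncomputable def buildGroup (G : List (Fin d) → Finset ℕ × (ℕ → Fin 2))
    (σ : List (Fin d)) : Finset ℕ × (ℕ → Fin 2) :=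
  if h : COND θ n d X σ then
    (Classical.choose (Classical.choose_spec
      (mono_refine (amb := X) (C := colC θ n d X f G σ) h.1 h.2.1 n (ZZ θ n d X σ)
        h.2.2.1 h.2.2.2.1 h.2.2.2.2)),
     fun x => f {x, minN (Classical.choose (Classical.choose_spec
      (mono_refine (amb := X) (C := colC θ n d X f G σ) h.1 h.2.1 n (ZZ θ n d X σ)
        h.2.2.1 h.2.2.2.1 h.2.2.2.2)))})
  else (∅, fun _ => 0)

lemma buildGroup_spec (G : List (Fin d) → Finset ℕ × (ℕ → Fin 2)) (σ : List (Fin d))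
    (h : COND θ n d X σ) :
    (buildGroup θ n d X f G σ).1 ⊆ ZZ θ n d X σ ∧
    (buildGroup θ n d X f G σ).1 ∈ LargeStar θ n ∧
    (∀ y ∈ (buildGroup θ n d X f G σ).1, ∀ y' ∈ (buildGroup θ n d X f G σ).1,
      colC θ n d X f G σ y = colC θ n d X f G σ y') ∧
    (buildGroup θ n d X f G σ).2 = fun x => f {x, minN (buildGroup θ n d X f G σ).1} := by
  unfold buildGroup
  rw [dif_pos h]
  have hspec := Classical.choose_spec (Classical.choose_spec
      (mono_refine (amb := X) (C := colC θ n d X f G σ) h.1 h.2.1 n (ZZ θ n d X σ)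
        h.2.2.1 h.2.2.2.1 h.2.2.2.2))
  refine ⟨hspec.1, hspec.2.1, ?_, rfl⟩
  intro y hy y' hy'
  rw [hspec.2.2 y hy, hspec.2.2 y' hy']

/-- sequentially refine all the groups (input list in ascending lex order;
later groups are refined first) -/
noncomputable def go : List (List (Fin d)) → List (Fin d) → Finset ℕ × (ℕ → Fin 2)
  | [] => fun _ => (∅, fun _ => 0)
  | σ :: rest => fun τ =>
      if τ = σ then buildGroup θ n d X f (go rest) σ else go rest τ

lemma go_stable {l : List (List (Fin d))} {σ τ : List (Fin d)} (h : τ ≠ σ) :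
    go θ n d X f (σ :: l) τ = go θ n d X f l τ := by simp [go, h]

lemma go_head (σ : List (Fin d)) (l : List (List (Fin d))) :
    go θ n d X f (σ :: l) σ = buildGroup θ n d X f (go θ n d X f l) σ := by simp [go]

lemma go_peel : ∀ (pre l : List (List (Fin d))) (τ : List (Fin d)), τ ∉ pre →
    go θ n d X f (pre ++ l) τ = go θ n d X f l τ := by
  intro pre
  induction pre with
  | nil => intro l τ _; rfl
  | cons ρ pre ih =>
    intro l τ hτ
    rw [List.cons_append,
      go_stable θ n d X f (fun h => hτ (by rw [h]; exact List.mem_cons_self)),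
      ih l τ (fun h => hτ (List.mem_cons_of_mem ρ h))]

end Assembly
end Stmt15
namespace Stmt15

section Assembly2

variable (θ : ℕ → ℕ → ℕ → Prop) (n d : ℕ) (X : Finset ℕ) (f : Finset ℕ → Fin 2)

lemma cond_holds (hd : 1 ≤ d) (hX : X ∈ MulSeq θ (LargeStar θ (n+2)) (List.replicate n d))
    (hsp : ExpSparse X) (h3 : 3 ≤ minN X) (hmin : 2 ^ d ^ n ≤ minN X)
    (σ : List (Fin d)) (hσ : σ.length = n) : COND θ n d X σ := by
  have hamb3 : ∀ y ∈ X, 3 ≤ y := fun y hy => le_trans h3 (minN_le hy)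
  have hmem0 := nodeF_mem θ σ X n (le_of_eq hσ) hX
  have hZsub : ZZ θ n d X σ ⊆ X := hmem0.2
  have hZL : ZZ θ n d X σ ∈ LargeStar θ (n+2) := by
    have h1 := hmem0.1
    rw [hσ, Nat.sub_self] at h1
    exact h1
  have hZne : (ZZ θ n d X σ).Nonempty := largeStar_nonempty hZL
  set m := minN (ZZ θ n d X σ) with hm
  have hmX : m ∈ X := hZsub (minN_mem hZne)
  have hminXm : minN X ≤ m := minN_le hmX
  have hcard : Fintype.card (kT θ n d X σ)
      = 2 ^ (X.filter (fun v => v < m)).card * 2 ^ (LATERS n d σ).card := by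
    rw [Fintype.card_prod, Fintype.card_fun, Fintype.card_fun, Fintype.card_coe,
      Fintype.card_coe, Fintype.card_fin]
  have hN : (LATERS n d σ).card ≤ d ^ n - 1 := by
    have hsub : LATERS n d σ ⊆ ((allLists d n).toFinset).erase σ := by
      intro τ hτ
      rw [LATERS, Finset.mem_filter] at hτ
      refine Finset.mem_erase.mpr ⟨?_, hτ.1⟩
      intro hEq
      subst hEq
      exact lex_irrefl τ hτ.2
    have hcurmem : σ ∈ (allLists d n).toFinset :=
      List.mem_toFinset.mpr (mem_allLists.mpr hσ)
    have h1 := Finset.card_le_card hsub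
    rwa [Finset.card_erase_of_mem hcurmem,
      List.toFinset_card_of_nodup (allLists_nodup d n), allLists_length] at h1
  have hdn1 : 1 ≤ d ^ n := Nat.one_le_pow _ _ hd
  refine ⟨hsp, hamb3, hZsub, hZL, ?_⟩
  rcases Nat.eq_zero_or_pos (X.filter (fun v => v < m)).card with hT | hT
  · rw [hcard, hT, pow_zero, one_mul]
    calc 2 ^ (LATERS n d σ).card ≤ 2 ^ (d ^ n - 1) :=
          Nat.pow_le_pow_right (by omega) hN
      _ < 2 ^ (d ^ n) := Nat.pow_lt_pow_right (by omega) (by omega)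
      _ ≤ minN X := hmin
      _ ≤ m := hminXm
  · obtain ⟨u, hu, humax⟩ := Finset.exists_max_image _ id (Finset.card_pos.mp hT)
    have huX : u ∈ X := (Finset.mem_filter.mp hu).1
    have hum : u < m := (Finset.mem_filter.mp hu).2
    have hu3 : 3 ≤ u := hamb3 u huX
    have h4u : 4 ^ u < m := hsp u huX m hmX hum
    have hTle : (X.filter (fun v => v < m)).card ≤ u - 2 := by
      have hsub : X.filter (fun v => v < m) ⊆ Finset.Icc 3 u := by
        intro v hv
        exact Finset.mem_Icc.mpr ⟨hamb3 v (Finset.mem_filter.mp hv).1, humax v hv⟩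
      have h1 := Finset.card_le_card hsub
      have h2 : u + 1 - 3 = u - 2 := by omega
      rwa [Nat.card_Icc, h2] at h1
    have hdnu : d ^ n ≤ u := by
      have h1 : 2 ^ d ^ n ≤ u := le_trans hmin (minN_le huX)
      have h2 : d ^ n < 2 ^ d ^ n := Nat.lt_two_pow_self
      omega
    rw [hcard]
    calc 2 ^ (X.filter (fun v => v < m)).card * 2 ^ (LATERS n d σ).card
        ≤ 2 ^ (u - 2) * 2 ^ (d ^ n - 1) :=
          Nat.mul_le_mul (Nat.pow_le_pow_right (by omega) hTle)
            (Nat.pow_le_pow_right (by omega) hN)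
      _ = 2 ^ ((u - 2) + (d ^ n - 1)) := (pow_add 2 _ _).symm
      _ ≤ 2 ^ (2 * u) := Nat.pow_le_pow_right (by omega) (by omega)
      _ = 4 ^ u := by rw [pow_mul]; norm_num
      _ < m := h4u

lemma invariant (hd : 1 ≤ d) (hX : X ∈ MulSeq θ (LargeStar θ (n+2)) (List.replicate n d))
    (hsp : ExpSparse X) (h3 : 3 ≤ minN X) (hmin : 2 ^ d ^ n ≤ minN X) :
    ∀ (l pre : List (List (Fin d))), allLists d n = pre ++ l → ∀ σ ∈ l,
    (go θ n d X f (allLists d n) σ).1 ⊆ ZZ θ n d X σ ∧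
    (go θ n d X f (allLists d n) σ).1 ∈ LargeStar θ n ∧
    (∀ x ∈ X, x < minN (ZZ θ n d X σ) → ∀ y ∈ (go θ n d X f (allLists d n) σ).1,
      f {x, y} = f {x, minN (go θ n d X f (allLists d n) σ).1}) ∧
    (∀ τ : List (Fin d), τ.length = n → List.Lex (· < ·) σ τ →
      ∀ y ∈ (go θ n d X f (allLists d n) σ).1, ∀ y' ∈ (go θ n d X f (allLists d n) σ).1,
        (go θ n d X f (allLists d n) τ).2 y = (go θ n d X f (allLists d n) τ).2 y') ∧
    (go θ n d X f (allLists d n) σ).2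
      = fun x => f {x, minN (go θ n d X f (allLists d n) σ).1} := by
  intro l
  induction l with
  | nil => intro pre heq σ hσ; cases hσ
  | cons σ₀ rest ih =>
    intro pre heq σ hσmem
    rcases List.mem_cons.mp hσmem with rfl | hσrest
    · -- σ = σ₀ : the head
      have hnd := allLists_nodup d n
      rw [heq] at hnd
      obtain ⟨hnd1, hnd2, hdisj⟩ := List.nodup_append.mp hnd
      have hσ0pre : σ ∉ pre := fun h => hdisj σ h σ List.mem_cons_self rfl
      have hA0 : go θ n d X f (allLists d n) σ
          = buildGroup θ n d X f (go θ n d X f rest) σ := by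
        rw [heq, go_peel θ n d X f pre _ σ hσ0pre, go_head]
      have hσ0len : σ.length = n := by
        apply mem_allLists.mp
        rw [heq]
        exact List.mem_append_right pre (List.mem_cons_self)
      have hcond := cond_holds θ n d X hd hX hsp h3 hmin σ hσ0len
      have hbs := buildGroup_spec θ n d X f (go θ n d X f rest) σ hcond
      have hAτ : ∀ τ : List (Fin d), τ.length = n → List.Lex (· < ·) σ τ →
          go θ n d X f (allLists d n) τ = go θ n d X f rest τ := by
        intro τ hτlen hlex
        have hτmem : τ ∈ allLists d n := mem_allLists.mpr hτlen
        have hpw := pairwise_allLists d n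
        rw [heq, List.pairwise_append] at hpw
        have hτpre : τ ∉ pre := by
          intro hin
          exact lex_asymm hlex (hpw.2.2 τ hin σ (List.mem_cons_self))
        have hτσ : τ ≠ σ := by
          intro hEq; subst hEq; exact lex_irrefl τ hlex
        have hτrest : τ ∉ pre ++ [σ] := by
          intro hin
          rcases List.mem_append.mp hin with h | h
          · exact hτpre h
          · rw [List.mem_singleton] at h; exact hτσ h
        rw [heq, List.append_cons, go_peel θ n d X f (pre ++ [σ]) rest τ hτrest]
      have hYne : (buildGroup θ n d X f (go θ n d X f rest) σ).1.Nonempty :=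
        largeStar_nonempty hbs.2.1
      rw [hA0]
      refine ⟨hbs.1, hbs.2.1, ?_, ?_, hbs.2.2.2⟩
      · -- below-vector monochromaticity
        intro x hx hxlt y hy
        have hmono := hbs.2.2.1 y hy (minN (buildGroup θ n d X f (go θ n d X f rest) σ).1)
          (minN_mem hYne)
        have h1 := congrArg Prod.fst hmono
        have h2 := congrFun h1 ⟨x, Finset.mem_filter.mpr ⟨hx, hxlt⟩⟩
        simpa [colC] using h2
      · -- future-trace monochromaticity
        intro τ hτlen hlex y hy y' hy'
        have hmono := hbs.2.2.1 y hy y' hy'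
        have h1 := congrArg Prod.snd hmono
        have hτLATERS : τ ∈ LATERS n d σ :=
          Finset.mem_filter.mpr ⟨List.mem_toFinset.mpr (mem_allLists.mpr hτlen), hlex⟩
        have h2 := congrFun h1 ⟨τ, hτLATERS⟩
        rw [hAτ τ hτlen hlex]
        simpa [colC] using h2
    · -- σ strictly later : use the induction hypothesis
      refine ih (pre ++ [σ₀]) ?_ σ hσrest
      rw [heq, List.append_cons]

end Assembly2
end Stmt15
namespace Stmt15

theorem stmt_15' (θ : ℕ → ℕ → ℕ → Prop) (n d : ℕ) (X : Finset ℕ)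
    (h3 : 3 ≤ minN X)
    (hX : X ∈ MulSeq θ (LargeStar θ (n + 2)) (List.replicate n d))
    (hsp : ExpSparse X) (hmin : 2 ^ d ^ n ≤ minN X)
    (f : Finset ℕ → Fin 2) :
    ∃ Y : List (Fin d) → Finset ℕ,
      (∀ σ : List (Fin d), σ.length = n → Y σ ∈ LargeStar θ n ∧ Y σ ⊆ X) ∧
      (∃ g : List (Fin d) → Finset ℕ,
        (∀ σ : List (Fin d), σ.length ≤ n →
          (↑(g σ) : Set ℕ) =
            ⋃ (ρ : List (Fin d)) (_ : ρ.length = n ∧ σ <+: ρ), (↑(Y ρ) : Set ℕ)) ∧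
        (∀ ℓ ≤ n, ∀ σ τ : List (Fin d), σ.length = ℓ → τ.length = ℓ →
          List.Lex (· < ·) σ τ →
          SetBelow (g σ) (g τ) ∧ ThetaApart θ (g σ) (g τ))) ∧
      (∃ c : Finset (List (Fin d)) → Fin 2,
        ∀ σ τ : List (Fin d), σ.length = n → τ.length = n → σ ≠ τ →
          ∀ x ∈ Y σ, ∀ y ∈ Y τ, f {x, y} = c {σ, τ}) := by
  classical
  rcases Nat.eq_zero_or_pos d with rfl | hd
  · -- degenerate case d = 0
    rcases Nat.eq_zero_or_pos n with rfl | hn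
    · -- d = 0, n = 0 : the only index is []
      have hXL : X ∈ LargeStar θ 2 := hX
      have hXne : X.Nonempty := largeStar_nonempty hXL
      refine ⟨fun _ => X, ?_, ⟨fun _ => X, ?_, ?_⟩, ⟨fun _ => 0, ?_⟩⟩
      · intro σ _
        exact ⟨hXne, Finset.Subset.refl X⟩
      · intro σ hσ
        have hσnil : σ = [] := List.length_eq_zero_iff.mp (by omega)
        subst hσnil
        ext x
        simp only [Set.mem_iUnion, Finset.mem_coe]
        constructor
        · intro hx
          exact ⟨[], ⟨rfl, List.prefix_refl []⟩, hx⟩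
        · rintro ⟨ρ, -, hx⟩
          exact hx
      · intro ℓ hℓ σ τ hσ hτ hlex
        have hσnil : σ = [] := List.length_eq_zero_iff.mp (by omega)
        have hτnil : τ = [] := List.length_eq_zero_iff.mp (by omega)
        subst hσnil; subst hτnil
        cases hlex
      · intro σ τ hσ hτ hne _ _ _ _
        have hσnil : σ = [] := List.length_eq_zero_iff.mp (by omega)
        have hτnil : τ = [] := List.length_eq_zero_iff.mp (by omega)
        exact absurd (hσnil.trans hτnil.symm) hne
    · -- d = 0, n ≥ 1 : there are no indices at all
      have hnone : ∀ σ : List (Fin 0), σ.length ≠ n := by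
        intro σ
        cases σ with
        | nil => simpa using (by omega : (0 : ℕ) ≠ n)
        | cons a _ => exact a.elim0
      refine ⟨fun _ => ∅, ?_, ⟨fun _ => ∅, ?_, ?_⟩, ⟨fun _ => 0, ?_⟩⟩
      · intro σ hσ
        exact absurd hσ (hnone σ)
      · intro σ _
        ext x
        simp only [Set.mem_iUnion, Finset.mem_coe]
        constructor
        · intro hx
          simp at hx
        · rintro ⟨ρ, ⟨hρlen, -⟩, -⟩
          exact absurd hρlen (hnone ρ)
      · intro ℓ _ σ τ _ _ _
        constructor
        · intro x hx
          simp at hx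
        · intro x hx
          exfalso
          have h0 : maxN ((fun _ => (∅ : Finset ℕ)) σ) = 0 := Finset.sup_empty
          omega
      · intro σ τ hσ _ _ _ _
        exact absurd hσ (hnone σ)
  · -- main case d ≥ 1
    have hamb3 : ∀ y ∈ X, 3 ≤ y := fun y hy => le_trans h3 (minN_le hy)
    have hInv := invariant θ n d X f hd hX hsp h3 hmin (allLists d n) [] rfl
    set A := go θ n d X f (allLists d n) with hA
    -- the groups
    set Y : List (Fin d) → Finset ℕ := fun σ => (A σ).1 with hY
    have hprop : ∀ σ : List (Fin d), σ.length = n →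
        Y σ ⊆ ZZ θ n d X σ ∧ Y σ ∈ LargeStar θ n ∧
        (∀ x ∈ X, x < minN (ZZ θ n d X σ) → ∀ y ∈ Y σ, f {x, y} = f {x, minN (Y σ)}) ∧
        (∀ τ : List (Fin d), τ.length = n → List.Lex (· < ·) σ τ →
          ∀ y ∈ Y σ, ∀ y' ∈ Y σ, (A τ).2 y = (A τ).2 y') ∧
        (A σ).2 = fun x => f {x, minN (Y σ)} :=
      fun σ hσ => hInv σ (mem_allLists.mpr hσ)
    have hZZX : ∀ σ : List (Fin d), σ.length ≤ n → ZZ θ n d X σ ⊆ X :=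
      fun σ hσ => (nodeF_mem θ σ X n hσ hX).2
    have hYX : ∀ σ : List (Fin d), σ.length = n → Y σ ⊆ X :=
      fun σ hσ => ((hprop σ hσ).1).trans (hZZX σ (le_of_eq hσ))
    have hYne : ∀ σ : List (Fin d), σ.length = n → (Y σ).Nonempty :=
      fun σ hσ => largeStar_nonempty (hprop σ hσ).2.1
    -- the union function g
    set g : List (Fin d) → Finset ℕ := fun σ =>
      ((allLists d n).toFinset.filter (fun ρ => σ <+: ρ)).biUnion (fun ρ => Y ρ) with hg
    have hgsub : ∀ σ : List (Fin d), σ.length ≤ n → g σ ⊆ nodeF θ n d X n σ := by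
      intro σ hσ z hz
      obtain ⟨ρ, hρ, hzρ⟩ := Finset.mem_biUnion.mp hz
      rw [Finset.mem_filter, List.mem_toFinset] at hρ
      have hρlen : ρ.length = n := mem_allLists.mp hρ.1
      have h1 : Y ρ ⊆ ZZ θ n d X ρ := (hprop ρ hρlen).1
      have h2 : nodeF θ n d X n ρ ⊆ nodeF θ n d X n σ :=
        nodeF_prefix_subset θ σ ρ X n (le_of_eq hρlen) hX hρ.2
      exact h2 (h1 hzρ)
    have hgne : ∀ σ : List (Fin d), σ.length ≤ n → (g σ).Nonempty := by
      intro σ hσ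
      set ρ := σ ++ List.replicate (n - σ.length) (⟨0, hd⟩ : Fin d) with hρ
      have hρlen : ρ.length = n := by
        rw [hρ, List.length_append, List.length_replicate]
        omega
      have hρmem : ρ ∈ (allLists d n).toFinset.filter (fun ρ => σ <+: ρ) := by
        rw [Finset.mem_filter, List.mem_toFinset]
        exact ⟨mem_allLists.mpr hρlen, ⟨_, rfl⟩⟩
      obtain ⟨z, hz⟩ := hYne ρ hρlen
      exact ⟨z, Finset.mem_biUnion.mpr ⟨ρ, hρmem, hz⟩⟩
    -- the key colour-agreement chain
    have key : ∀ σ τ : List (Fin d), σ.length = n → τ.length = n →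
        List.Lex (· < ·) σ τ → ∀ x ∈ Y σ, ∀ y ∈ Y τ,
        f {x, y} = f {minN (Y σ), minN (Y τ)} := by
      intro σ τ hσlen hτlen hlex x hx y hy
      have hσp := hprop σ hσlen
      have hτp := hprop τ hτlen
      have hxX : x ∈ X := hYX σ hσlen hx
      have hZτne : (ZZ θ n d X τ).Nonempty := ((hYne τ hτlen).mono hτp.1)
      have hsep := nodeF_sep θ hd σ τ X n (hσlen.trans hτlen.symm)
        (le_of_eq hσlen) hX hlex
      have hxlt : x < minN (ZZ θ n d X τ) :=
        setBelow_lt_minN hsep.1 (hσp.1 hx) hZτne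
      have step1 : f {x, y} = f {x, minN (Y τ)} := hτp.2.2.1 x hxX hxlt y hy
      have step2 : (A τ).2 x = f {x, minN (Y τ)} := by rw [hτp.2.2.2.2]
      have step3 : (A τ).2 x = (A τ).2 (minN (Y σ)) :=
        hσp.2.2.2.1 τ hτlen hlex x hx (minN (Y σ)) (minN_mem (hYne σ hσlen))
      have step4 : (A τ).2 (minN (Y σ)) = f {minN (Y σ), minN (Y τ)} := by
        rw [hτp.2.2.2.2]
      rw [step1, ← step2, step3, step4]
    refine ⟨Y, ?_, ⟨g, ?_, ?_⟩, ⟨fun S => f (S.image (fun ρ => minN (Y ρ))), ?_⟩⟩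
    · intro σ hσ
      exact ⟨(hprop σ hσ).2.1, hYX σ hσ⟩
    · -- the union property of g
      intro σ hσ
      ext x
      simp only [Set.mem_iUnion, Finset.mem_coe]
      constructor
      · intro hx
        obtain ⟨ρ, hρ, hzρ⟩ := Finset.mem_biUnion.mp hx
        rw [Finset.mem_filter, List.mem_toFinset] at hρ
        exact ⟨ρ, ⟨mem_allLists.mp hρ.1, hρ.2⟩, hzρ⟩
      · rintro ⟨ρ, ⟨hρlen, hρpre⟩, hx⟩
        exact Finset.mem_biUnion.mpr
          ⟨ρ, Finset.mem_filter.mpr ⟨List.mem_toFinset.mpr (mem_allLists.mpr hρlen), hρpre⟩, hx⟩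
    · -- separation of the g's
      intro ℓ hℓ σ τ hσlen hτlen hlex
      have hsep := nodeF_sep θ hd σ τ X n (hσlen.trans hτlen.symm)
        (by omega) hX hlex
      exact ⟨setBelow_mono hsep.1 (hgsub σ (by omega)) (hgsub τ (by omega)),
        thetaApart_mono hsep.2 (hgsub σ (by omega)) (hgsub τ (by omega)) (hgne τ (by omega))⟩
    · -- homogeneity between groups
      intro σ τ hσlen hτlen hne x hx y hy
      have himg : ({σ, τ} : Finset (List (Fin d))).image (fun ρ => minN (Y ρ))
          = {minN (Y σ), minN (Y τ)} := by
        simp [Finset.image_insert]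
      rcases lex_total hne with hlex | hlex
      · show f {x, y} = f (Finset.image (fun ρ => minN (Y ρ)) {σ, τ})
        rw [himg]
        exact key σ τ hσlen hτlen hlex x hx y hy
      · show f {x, y} = f (Finset.image (fun ρ => minN (Y ρ)) {σ, τ})
        rw [himg]
        have h1 := key τ σ hτlen hσlen hlex y hy x hx
        calc f {x, y} = f {y, x} := by rw [Finset.pair_comm]
          _ = f {minN (Y τ), minN (Y σ)} := h1
          _ = f {minN (Y σ), minN (Y τ)} := by rw [Finset.pair_comm]

end Stmt15

/-- grouping principle. -/
theorem stmt_15 (θ : ℕ → ℕ → ℕ → Prop) (n d : ℕ) (X : Finset ℕ)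
    (h3 : 3 ≤ minN X)
    (hX : X ∈ MulSeq θ (LargeStar θ (n + 2)) (List.replicate n d))
    (hsp : ExpSparse X) (hmin : 2 ^ d ^ n ≤ minN X)
    (f : Finset ℕ → Fin 2) :
    ∃ Y : List (Fin d) → Finset ℕ,
      (∀ σ : List (Fin d), σ.length = n → Y σ ∈ LargeStar θ n ∧ Y σ ⊆ X) ∧
      (∃ g : List (Fin d) → Finset ℕ,
        (∀ σ : List (Fin d), σ.length ≤ n →
          (↑(g σ) : Set ℕ) =
            ⋃ (ρ : List (Fin d)) (_ : ρ.length = n ∧ σ <+: ρ), (↑(Y ρ) : Set ℕ)) ∧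
        (∀ ℓ ≤ n, ∀ σ τ : List (Fin d), σ.length = ℓ → τ.length = ℓ →
          List.Lex (· < ·) σ τ →
          SetBelow (g σ) (g τ) ∧ ThetaApart θ (g σ) (g τ))) ∧
      (∃ c : Finset (List (Fin d)) → Fin 2,
        ∀ σ τ : List (Fin d), σ.length = n → τ.length = n → σ ≠ τ →
          ∀ x ∈ Y σ, ∀ y ∈ Y τ, f {x, y} = c {σ, τ}) :=
  Stmt15.stmt_15' θ n d X h3 hX hsp hmin f
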